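/- For positive integers n and s, Σ_{|μ|=n} X^{l(μ)-1}/z_μ · (Σ_{i=1}^{l(μ)} (μ_i)_s) = (s-1)! · Σ_{k=1}^{min(n,s)} C(s,k)·C(X+n-1, n-k), as polynomials in the indeterminate X. -/

import Mathlib

open Finset

/-- Rising factorial `(a)_s = a(a+1)⋯(a+s-1)`. -/
def asc (a : ℚ) (s : ℕ) : ℚ := ∏ t ∈ range s, (a + t)

/-- Falling factorial `[Y]_m = Y(Y-1)⋯(Y-m+1)`. -/
def desc (a : ℚ) (m : ℕ) : ℚ := ∏ t ∈ range m, (a - t)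

/-- `z_μ = Π_i i^{m_i(μ)}·m_i(μ)!`, where `m_i(μ)` is the multiplicity of `i` in `μ`. -/
def zpart (n : ℕ) (μ : n.Partition) : ℚ :=
  ∏ i ∈ range (n + 1), ((i : ℚ) ^ (μ.parts.count i) * (Nat.factorial (μ.parts.count i) : ℚ))

lemma desc_zero (a : ℚ) : desc a 0 = 1 := by simp [desc]

lemma desc_succ (a : ℚ) (m : ℕ) : desc a (m+1) = desc a m * (a - m) :=
  Finset.prod_range_succ _ _

lemma desc_succ' (a : ℚ) (m : ℕ) : desc a (m+1) = a * desc (a-1) m := by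
  rw [desc, Finset.prod_range_succ', desc]
  have h : ∀ t ∈ range m, (a - ↑(t+1)) = ((a-1) - t) := by
    intro t _; push_cast; ring
  rw [Finset.prod_congr rfl h]
  simp [mul_comm]

lemma desc_natCast (a m : ℕ) : desc (a:ℚ) m = (a.descFactorial m : ℚ) := by
  induction m with
  | zero => simp [desc_zero]
  | succ m ih =>
    rw [desc_succ, ih, Nat.descFactorial_succ]
    rcases Nat.lt_or_ge m a with h | h
    · push_cast [Nat.cast_sub h.le]
      ring
    · rcases Nat.eq_or_lt_of_le h with rfl | h2
      · simp
      · have : a.descFactorial m = 0 := Nat.descFactorial_eq_zero_iff_lt.2 h2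
        rw [this]
        simp [Nat.descFactorial_eq_zero_iff_lt.2 (by omega : a < m + 1)]

lemma asc_natCast (a m : ℕ) : asc (a:ℚ) m = (a.ascFactorial m : ℚ) := by
  induction m with
  | zero => simp [asc]
  | succ m ih =>
    rw [asc, Finset.prod_range_succ, ← asc, ih, Nat.ascFactorial_succ]
    push_cast
    ring

lemma asc_zero_eq (s : ℕ) (hs : 1 ≤ s) : asc (0:ℚ) s = 0 := by
  rw [asc]
  apply Finset.prod_eq_zero (Finset.mem_range.2 (by omega : 0 < s))
  simp

/-- `asc i s = i * (s-1)! * C(i+s-1, i)` for `i, s ≥ 1`. -/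
lemma asc_eq (i s : ℕ) (hi : 1 ≤ i) (hs : 1 ≤ s) :
    asc (i:ℚ) s = (i : ℚ) * (Nat.factorial (s-1) : ℚ) * ((i+s-1).choose i : ℚ) := by
  have key : i.ascFactorial s = i * (s-1).factorial * ((i+s-1).choose i) := by
    have h1 : i.ascFactorial s = s.factorial * (i+s-1).choose s :=
      Nat.ascFactorial_eq_factorial_mul_choose' i s
    have h2 : s * (s-1).factorial = s.factorial := Nat.mul_factorial_pred (by omega)
    have h3 : (i+s-1).choose s * s = (i+s-1).choose (s-1) * i := by
      have := Nat.choose_succ_right_eq (i+s-1) (s-1)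
      rw [show s - 1 + 1 = s by omega] at this
      rw [this, show i + s - 1 - (s-1) = i by omega]
    have h4 : (i+s-1).choose (s-1) = (i+s-1).choose i := by
      have := Nat.choose_symm (by omega : i ≤ i + s - 1)
      rwa [show i + s - 1 - i = s - 1 by omega] at this
    calc i.ascFactorial s = s.factorial * (i+s-1).choose s := h1
      _ = (s-1).factorial * ((i+s-1).choose s * s) := by rw [← h2]; ring
      _ = (s-1).factorial * ((i+s-1).choose (s-1) * i) := by rw [h3]
      _ = i * (s-1).factorial * ((i+s-1).choose i) := by rw [h4]; ring
  rw [asc_natCast, key]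
  push_cast
  ring

/-- Convolution of binomial coefficients (negative-binomial Vandermonde). -/
lemma conv (p : ℕ) : ∀ q n : ℕ, ∑ r ∈ range (n+1), (r+p).choose p * ((n-r)+q).choose q
    = (n+p+q+1).choose (p+q+1) := by
  intro q
  induction q with
  | zero =>
    intro n
    simpa using Nat.sum_range_add_choose n p
  | succ q ihq =>
    intro n
    induction n with
    | zero => simp
    | succ n ihn =>
      have step : ∀ r ∈ range (n+2), (r+p).choose p * ((n+1-r)+(q+1)).choose (q+1)
          = (r+p).choose p * ((n+1-r)+q).choose q
            + (r+p).choose p * ((n+1-r)+q).choose (q+1) := by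
        intro r _
        rw [show (n+1-r)+(q+1) = ((n+1-r)+q)+1 by omega, Nat.choose_succ_succ]
        ring
      rw [Finset.sum_congr rfl step, Finset.sum_add_distrib]
      have e1 : ∑ r ∈ range (n+2), (r+p).choose p * ((n+1-r)+q).choose q
          = (n+1+p+q+1).choose (p+q+1) := ihq (n+1)
      have e2 : ∑ r ∈ range (n+2), (r+p).choose p * ((n+1-r)+q).choose (q+1)
          = (n+p+q+2).choose (p+q+2) := by
        rw [Finset.sum_range_succ]
        have : (n+1-(n+1))+q = q := by omega
        rw [this, Nat.choose_succ_self, Nat.mul_zero, add_zero]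
        rw [Finset.sum_congr rfl (fun r hr => by
          rw [show (n+1-r)+q = ((n-r)+(q+1)) by
            have := Finset.mem_range.1 hr; omega])]
        rw [ihn]
        congr 1
      rw [show n+1+p+q+1 = n+p+q+2 by omega] at e1
      rw [e1, e2, show n+1+p+(q+1)+1 = (n+p+q+2)+1 by omega,
        show p+(q+1)+1 = (p+q+1)+1 by omega]
      conv_rhs => rw [Nat.choose_succ_succ]
/-- The key rational identity, lifted from the natural-number convolution identity. -/
lemma keyQ (n s : ℕ) (hs : 1 ≤ s) (X : ℚ) :
    ∑ r ∈ range (n+1), ((r+s-1).choose r : ℚ) *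
        (desc (X + ((n:ℚ) - r) - 1) (n-r) / Nat.factorial (n-r))
    = ∑ k ∈ range (n+1), ((s.choose k : ℚ)) *
        (desc (X + n - 1) (n-k) / Nat.factorial (n-k)) := by
  set P : Polynomial ℚ := ∑ r ∈ range (n+1),
    Polynomial.C (((r+s-1).choose r : ℚ) / Nat.factorial (n-r)) *
      ∏ t ∈ range (n-r), (Polynomial.X + Polynomial.C ((n:ℚ) - r - 1 - t)) with hP
  set Q : Polynomial ℚ := ∑ k ∈ range (n+1),
    Polynomial.C ((s.choose k : ℚ) / Nat.factorial (n-k)) *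
      ∏ t ∈ range (n-k), (Polynomial.X + Polynomial.C ((n:ℚ) - 1 - t)) with hQ
  have evalP : ∀ x : ℚ, P.eval x = ∑ r ∈ range (n+1), ((r+s-1).choose r : ℚ) *
      (desc (x + ((n:ℚ) - r) - 1) (n-r) / Nat.factorial (n-r)) := by
    intro x
    rw [hP, Polynomial.eval_finset_sum]
    refine Finset.sum_congr rfl fun r _ => ?_
    rw [Polynomial.eval_mul, Polynomial.eval_C, Polynomial.eval_prod]
    have : ∀ t ∈ range (n-r), (Polynomial.X + Polynomial.C ((n:ℚ) - r - 1 - t)).eval x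
        = (x + ((n:ℚ) - r) - 1) - t := by
      intro t _
      simp; ring
    rw [Finset.prod_congr rfl this, ← desc]
    ring
  have evalQ : ∀ x : ℚ, Q.eval x = ∑ k ∈ range (n+1), ((s.choose k : ℚ)) *
      (desc (x + n - 1) (n-k) / Nat.factorial (n-k)) := by
    intro x
    rw [hQ, Polynomial.eval_finset_sum]
    refine Finset.sum_congr rfl fun k _ => ?_
    rw [Polynomial.eval_mul, Polynomial.eval_C, Polynomial.eval_prod]
    have : ∀ t ∈ range (n-k), (Polynomial.X + Polynomial.C ((n:ℚ) - 1 - t)).eval x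
        = (x + (n:ℚ) - 1) - t := by
      intro t _
      simp; ring
    rw [Finset.prod_congr rfl this, ← desc]
    ring
  have hroot : ∀ N : ℕ, (P - Q).IsRoot ((N+1 : ℕ) : ℚ) := by
    intro N
    have hL : P.eval ((N+1:ℕ) : ℚ)
        = ((∑ r ∈ range (n+1), (r+s-1).choose r * ((N+(n-r)).choose (n-r)) : ℕ) : ℚ) := by
      rw [evalP]
      push_cast
      refine Finset.sum_congr rfl fun r hr => ?_
      have hrn : r ≤ n := by have := Finset.mem_range.1 hr; omega
      have e1 : (N:ℚ) + 1 + ((n:ℚ) - r) - 1 = (((N + (n-r)) : ℕ) : ℚ) := by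
        push_cast [Nat.cast_sub hrn]; ring
      rw [e1, desc_natCast, Nat.descFactorial_eq_factorial_mul_choose]
      push_cast
      have hf : (Nat.factorial (n-r) : ℚ) ≠ 0 := by
        exact_mod_cast (Nat.factorial_pos (n-r)).ne'
      field_simp
    have hR : Q.eval ((N+1:ℕ) : ℚ)
        = ((∑ k ∈ range (n+1), s.choose k * ((N+n).choose (n-k)) : ℕ) : ℚ) := by
      rw [evalQ]
      push_cast
      refine Finset.sum_congr rfl fun k hk => ?_
      have e1 : (N:ℚ) + 1 + (n:ℚ) - 1 = (((N + n) : ℕ) : ℚ) := by push_cast; ring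
      rw [e1, desc_natCast, Nat.descFactorial_eq_factorial_mul_choose]
      push_cast
      have hf : (Nat.factorial (n-k) : ℚ) ≠ 0 := by
        exact_mod_cast (Nat.factorial_pos (n-k)).ne'
      field_simp
    have hnat : (∑ r ∈ range (n+1), (r+s-1).choose r * ((N+(n-r)).choose (n-r)))
        = ∑ k ∈ range (n+1), s.choose k * ((N+n).choose (n-k)) := by
      have hLn : (∑ r ∈ range (n+1), (r+s-1).choose r * ((N+(n-r)).choose (n-r)))
          = (n+(s-1)+N+1).choose ((s-1)+N+1) := by
        rw [← conv (s-1) N n]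
        refine Finset.sum_congr rfl fun r hr => ?_
        congr 1
        · rw [show r + (s-1) = r+s-1 by omega]
          have := Nat.choose_symm (by omega : r ≤ r+s-1)
          rw [show r+s-1-r = s-1 by omega] at this
          exact this.symm
        · rw [show (n-r)+N = N+(n-r) by omega]
          have := Nat.choose_symm (by omega : N ≤ N+(n-r))
          rw [show N+(n-r)-N = n-r by omega] at this
          exact this
      have hRn : (∑ k ∈ range (n+1), s.choose k * ((N+n).choose (n-k)))
          = (s+(N+n)).choose n := by
        rw [Nat.add_choose_eq, Finset.Nat.sum_antidiagonal_eq_sum_range_succ_mk]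
      rw [hLn, hRn]
      have : (n+(s-1)+N+1).choose ((s-1)+N+1) = (n+(s-1)+N+1).choose n := by
        have := Nat.choose_symm (by omega : n ≤ n+(s-1)+N+1)
        rw [show n+(s-1)+N+1-n = (s-1)+N+1 by omega] at this
        exact this
      rw [this]
      congr 1
      omega
    simp only [Polynomial.IsRoot, Polynomial.eval_sub, hL, hR, hnat, sub_self]
  have hinf : {x : ℚ | (P - Q).IsRoot x}.Infinite := by
    apply Set.infinite_of_injective_forall_mem
      (f := fun N : ℕ => ((N+1 : ℕ) : ℚ))
    · intro a b hab
      simpa using hab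
    · intro N
      exact hroot N
  have hPQ : P - Q = 0 := Polynomial.eq_zero_of_infinite_isRoot _ hinf
  have := congrArg (Polynomial.eval X) hPQ
  rw [Polynomial.eval_sub, Polynomial.eval_zero, sub_eq_zero, evalP, evalQ] at this
  exact this
lemma parts_le {n : ℕ} (μ : n.Partition) {i : ℕ} (h : i ∈ μ.parts) : i ≤ n := by
  have := Multiset.single_le_sum (fun x _ => Nat.zero_le x) i h
  rwa [μ.parts_sum] at this

lemma count_parts_eq_zero {n : ℕ} (μ : n.Partition) {i : ℕ} (h : n < i) :
    μ.parts.count i = 0 :=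
  Multiset.count_eq_zero.2 fun hmem => absurd (parts_le μ hmem) (by omega)

lemma zpart_pos {n : ℕ} (μ : n.Partition) : 0 < zpart n μ := by
  rw [zpart]
  apply Finset.prod_pos
  intro i _
  rcases Nat.eq_zero_or_pos (μ.parts.count i) with h | h
  · simp [h]
  · have hipos : 0 < i := μ.parts_pos (Multiset.count_pos.1 h)
    apply mul_pos
    · exact pow_pos (by exact_mod_cast hipos) _
    · exact_mod_cast Nat.factorial_pos _

lemma zpart_ne {n : ℕ} (μ : n.Partition) : zpart n μ ≠ 0 := (zpart_pos μ).ne'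

lemma zpart_eq {m n : ℕ} (hmn : m ≤ n) (ν : m.Partition) :
    zpart m ν = ∏ i ∈ range (n+1),
      ((i : ℚ) ^ (ν.parts.count i) * (Nat.factorial (ν.parts.count i) : ℚ)) := by
  rw [zpart]
  apply Finset.prod_subset (Finset.range_subset_range.2 (by omega))
  intro i hi hni
  have : m < i := by
    simp only [Finset.mem_range] at hi hni
    omega
  rw [count_parts_eq_zero ν this]
  simp

/-- Add a part `r` to a partition of `n - r`, giving a partition of `n`. -/
def addPart (n r : ℕ) (hr : 0 < r) (hrn : r ≤ n) (ν : (n-r).Partition) : n.Partition where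
  parts := r ::ₘ ν.parts
  parts_pos := by
    intro i hi
    rcases Multiset.mem_cons.1 hi with rfl | h
    · exact hr
    · exact ν.parts_pos h
  parts_sum := by
    rw [Multiset.sum_cons, ν.parts_sum]
    omega

/-- Remove one part equal to `r` from a partition of `n`. -/
def removePart (n r : ℕ) (μ : n.Partition) (h : r ∈ μ.parts) : (n-r).Partition where
  parts := μ.parts.erase r
  parts_pos := fun hi => μ.parts_pos (Multiset.mem_of_mem_erase hi)
  parts_sum := by
    have hc : r ::ₘ μ.parts.erase r = μ.parts := Multiset.cons_erase h
    have h2 : (r ::ₘ μ.parts.erase r).sum = n := by rw [hc, μ.parts_sum]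
    rw [Multiset.sum_cons] at h2
    omega

lemma zpart_addPart (n r : ℕ) (hr : 0 < r) (hrn : r ≤ n) (ν : (n-r).Partition) :
    zpart n (addPart n r hr hrn ν)
      = (r : ℚ) * ((ν.parts.count r : ℚ) + 1) * zpart (n-r) ν := by
  have hmem : r ∈ range (n+1) := Finset.mem_range.2 (by omega)
  rw [zpart_eq (by omega : n - r ≤ n) ν, zpart]
  rw [← Finset.mul_prod_erase _ _ hmem, ← Finset.mul_prod_erase _ _ hmem]
  have hparts : (addPart n r hr hrn ν).parts = r ::ₘ ν.parts := rfl
  have hcount_r : (addPart n r hr hrn ν).parts.count r = ν.parts.count r + 1 := by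
    rw [hparts, Multiset.count_cons_self]
  have hcount_ne : ∀ i, i ≠ r → (addPart n r hr hrn ν).parts.count i = ν.parts.count i := by
    intro i hir
    rw [hparts, Multiset.count_cons_of_ne hir]
  have hprod : ∏ i ∈ (range (n+1)).erase r,
      ((i : ℚ) ^ ((addPart n r hr hrn ν).parts.count i)
        * (Nat.factorial ((addPart n r hr hrn ν).parts.count i) : ℚ))
      = ∏ i ∈ (range (n+1)).erase r,
      ((i : ℚ) ^ (ν.parts.count i) * (Nat.factorial (ν.parts.count i) : ℚ)) := by
    refine Finset.prod_congr rfl fun i hi => ?_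
    rw [hcount_ne i (Finset.mem_erase.1 hi).1]
  rw [hprod, hcount_r]
  push_cast [Nat.factorial_succ, pow_succ]
  ring

/-- The core bijection: marking a part equal to `r`. -/
lemma core (n r : ℕ) (X : ℚ) (hr : 0 < r) (hrn : r ≤ n) :
    ∑ μ : n.Partition, (μ.parts.count r : ℚ) * X ^ (μ.parts.card - 1) / zpart n μ
    = (1/(r:ℚ)) * ∑ ν : (n-r).Partition, X ^ (ν.parts.card) / zpart (n-r) ν := by
  rw [Finset.mul_sum]
  rw [← Finset.sum_filter_of_ne (p := fun μ : n.Partition => r ∈ μ.parts)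
    (by
      intro μ _ hne
      by_contra h
      rw [Multiset.count_eq_zero.2 h] at hne
      simp at hne)]
  symm
  refine Finset.sum_bij' (fun ν _ => addPart n r hr hrn ν)
    (fun μ hμ => removePart n r μ (by
      simpa using (Finset.mem_filter.1 hμ).2)) ?_ ?_ ?_ ?_ ?_
  · intro ν _
    simp only [Finset.mem_filter, Finset.mem_univ, true_and]
    exact Multiset.mem_cons_self r ν.parts
  · intro μ _
    exact Finset.mem_univ _
  · intro ν _
    apply Nat.Partition.ext
    exact Multiset.erase_cons_head r ν.parts
  · intro μ hμ
    apply Nat.Partition.ext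
    exact Multiset.cons_erase (by simpa using (Finset.mem_filter.1 hμ).2)
  · intro ν _
    rw [zpart_addPart n r hr hrn ν]
    have h1 : (addPart n r hr hrn ν).parts.count r = ν.parts.count r + 1 :=
      Multiset.count_cons_self r ν.parts
    have h2 : (addPart n r hr hrn ν).parts.card = ν.parts.card + 1 :=
      Multiset.card_cons r ν.parts
    rw [h1, h2]
    have hz : zpart (n-r) ν ≠ 0 := zpart_ne ν
    have hrQ : (r:ℚ) ≠ 0 := by exact_mod_cast hr.ne'
    have hc : ((ν.parts.count r : ℚ) + 1) ≠ 0 := by positivity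
    simp only [Nat.add_sub_cancel]
    push_cast
    field_simp

lemma parts_map_sum {m : ℕ} (ν : m.Partition) (f : ℕ → ℚ) :
    (ν.parts.map f).sum = ∑ i ∈ range (m+1), (ν.parts.count i : ℚ) * f i := by
  rw [Finset.sum_multiset_map_count]
  have hsub : ν.parts.toFinset ⊆ range (m+1) := by
    intro i hi
    have := parts_le ν (Multiset.mem_toFinset.1 hi)
    exact Finset.mem_range.2 (by omega)
  have hout : ∀ i ∈ range (m+1), i ∉ ν.parts.toFinset →
      (ν.parts.count i) • f i = 0 := by
    intro i _ hi
    rw [Multiset.count_eq_zero.2 (fun h => hi (Multiset.mem_toFinset.2 h)), zero_nsmul]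
  rw [Finset.sum_subset hsub hout]
  refine Finset.sum_congr rfl fun i _ => ?_
  rw [nsmul_eq_mul]

lemma count_mul_pow (n i : ℕ) (X : ℚ) :
    ∑ μ : n.Partition, (μ.parts.count i : ℚ) * X ^ μ.parts.card / zpart n μ
    = X * ∑ μ : n.Partition, (μ.parts.count i : ℚ) * X ^ (μ.parts.card - 1) / zpart n μ := by
  rw [Finset.mul_sum]
  refine Finset.sum_congr rfl fun μ _ => ?_
  rcases Nat.eq_zero_or_pos (μ.parts.count i) with h | h
  · simp [h]
  · have hmem := Multiset.count_pos.1 h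
    have hcard : μ.parts.card ≠ 0 := by
      intro hc
      rw [Multiset.card_eq_zero] at hc
      simp [hc] at hmem
    have hX : X ^ μ.parts.card = X * X ^ (μ.parts.card - 1) := by
      conv_lhs => rw [show μ.parts.card = (μ.parts.card - 1) + 1 by omega]
      rw [pow_succ]
      ring
    rw [hX]
    ring

lemma sum_Icc_reflect (m : ℕ) (f : ℕ → ℚ) :
    ∑ i ∈ Icc 1 m, f (m - i) = ∑ j ∈ range m, f j := by
  refine Finset.sum_nbij' (fun i => m - i) (fun j => m - j) ?_ ?_ ?_ ?_ ?_ <;>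
    intros a ha <;> simp only [Finset.mem_Icc, Finset.mem_range] at * <;> omega

lemma hockeyQ (X : ℚ) (m : ℕ) :
    ∑ j ∈ range (m+1), desc (X + (j:ℚ) - 1) j / (Nat.factorial j : ℚ)
      = desc (X + (m:ℚ)) m / (Nat.factorial m : ℚ) := by
  induction m with
  | zero => simp [desc_zero]
  | succ m ih =>
    rw [Finset.sum_range_succ, ih]
    have e1 : X + ((m+1 : ℕ):ℚ) - 1 = X + m := by push_cast; ring
    rw [e1, desc_succ (X + (m:ℚ)) m]
    have e2 : desc (X + ((m+1:ℕ):ℚ)) (m+1) = (X + (m:ℚ) + 1) * desc (X + (m:ℚ)) m := by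
      rw [desc_succ']
      have : X + ((m+1:ℕ):ℚ) - 1 = X + m := by push_cast; ring
      rw [this]
      push_cast
      ring
    rw [e2]
    have hf1 : (Nat.factorial m : ℚ) ≠ 0 := by exact_mod_cast (Nat.factorial_pos m).ne'
    have hf2 : (Nat.factorial (m+1) : ℚ) ≠ 0 := by exact_mod_cast (Nat.factorial_pos (m+1)).ne'
    rw [Nat.factorial_succ]
    push_cast
    field_simp
    ring

lemma A_eq (X : ℚ) (m : ℕ) :
    ∑ ν : m.Partition, X ^ ν.parts.card / zpart m ν
      = desc (X + (m:ℚ) - 1) m / (Nat.factorial m : ℚ) := by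
  induction m using Nat.strong_induction_on with
  | _ m ih =>
  rcases Nat.eq_zero_or_pos m with rfl | hm
  · rw [Finset.univ_unique, Finset.sum_singleton]
    simp [zpart, desc_zero]
  obtain ⟨k, rfl⟩ : ∃ k, m = k + 1 := ⟨m - 1, by omega⟩
  have hmQ : ((k+1 : ℕ):ℚ) ≠ 0 := by positivity
  have hsum : ∀ ν : (k+1).Partition,
      ∑ i ∈ range (k+2), (ν.parts.count i : ℚ) * (i:ℚ) = ((k+1:ℕ):ℚ) := by
    intro ν
    have h1 := parts_map_sum ν (fun i => (i:ℚ))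
    rw [← h1]
    have h2 : (Multiset.map (Nat.cast : ℕ → ℚ) ν.parts).sum = ((ν.parts.sum : ℕ) : ℚ) :=
      (Nat.cast_multiset_sum _).symm
    rw [ν.parts_sum] at h2
    exact h2
  have e1 : ((k+1:ℕ):ℚ) * (∑ ν : (k+1).Partition, X ^ ν.parts.card / zpart (k+1) ν)
      = ∑ i ∈ range (k+2), (i:ℚ) *
          ∑ ν : (k+1).Partition, (ν.parts.count i : ℚ) * X ^ ν.parts.card / zpart (k+1) ν := by
    rw [Finset.mul_sum]
    calc ∑ ν : (k+1).Partition, ((k+1:ℕ):ℚ) * (X ^ ν.parts.card / zpart (k+1) ν)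
        = ∑ ν : (k+1).Partition, ∑ i ∈ range (k+2),
            (i:ℚ) * ((ν.parts.count i : ℚ) * X ^ ν.parts.card / zpart (k+1) ν) := by
          refine Finset.sum_congr rfl fun ν _ => ?_
          rw [← hsum ν, Finset.sum_mul]
          refine Finset.sum_congr rfl fun i _ => ?_
          ring
      _ = ∑ i ∈ range (k+2), ∑ ν : (k+1).Partition,
            (i:ℚ) * ((ν.parts.count i : ℚ) * X ^ ν.parts.card / zpart (k+1) ν) :=
          Finset.sum_comm
      _ = ∑ i ∈ range (k+2), (i:ℚ) * ∑ ν : (k+1).Partition,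
            (ν.parts.count i : ℚ) * X ^ ν.parts.card / zpart (k+1) ν := by
          refine Finset.sum_congr rfl fun i _ => ?_
          rw [Finset.mul_sum]
  have e2 : ∑ i ∈ range (k+2), (i:ℚ) *
        ∑ ν : (k+1).Partition, (ν.parts.count i : ℚ) * X ^ ν.parts.card / zpart (k+1) ν
      = ∑ i ∈ Icc 1 (k+1), (i:ℚ) *
        ∑ ν : (k+1).Partition, (ν.parts.count i : ℚ) * X ^ ν.parts.card / zpart (k+1) ν := by
    symm
    apply Finset.sum_subset
    · intro x hx
      simp only [Finset.mem_Icc] at hx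
      simp only [Finset.mem_range]
      omega
    · intro i hi hni
      have hi0 : i = 0 := by
        simp only [Finset.mem_range] at hi
        simp only [Finset.mem_Icc] at hni
        omega
      subst hi0
      simp
  have e3 : ∀ i ∈ Icc 1 (k+1), (i:ℚ) *
        (∑ ν : (k+1).Partition, (ν.parts.count i : ℚ) * X ^ ν.parts.card / zpart (k+1) ν)
      = X * (desc (X + ((k+1-i : ℕ):ℚ) - 1) (k+1-i) / (Nat.factorial (k+1-i) : ℚ)) := by
    intro i hi
    simp only [Finset.mem_Icc] at hi
    rw [count_mul_pow, core (k+1) i X (by omega) (by omega), ih (k+1-i) (by omega)]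
    have hiQ : (i:ℚ) ≠ 0 := Nat.cast_ne_zero.2 (by omega)
    field_simp
  have e4 : ((k+1:ℕ):ℚ) * (∑ ν : (k+1).Partition, X ^ ν.parts.card / zpart (k+1) ν)
      = X * (desc (X + (k:ℚ)) k / (Nat.factorial k : ℚ)) := by
    rw [e1, e2, Finset.sum_congr rfl e3, ← Finset.mul_sum]
    congr 1
    have hrefl := sum_Icc_reflect (k+1)
      (fun j => desc (X + (j:ℚ) - 1) j / (Nat.factorial j : ℚ))
    rw [hrefl]
    exact hockeyQ X k
  apply mul_left_cancel₀ hmQ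
  rw [e4]
  have hd : desc (X + ((k+1:ℕ):ℚ) - 1) (k+1) = desc (X + (k:ℚ)) k * X := by
    have : X + ((k+1:ℕ):ℚ) - 1 = X + (k:ℚ) := by push_cast; ring
    rw [this, desc_succ]
    ring
  rw [hd, Nat.factorial_succ]
  have hf1 : (Nat.factorial k : ℚ) ≠ 0 := by exact_mod_cast (Nat.factorial_pos k).ne'
  push_cast
  field_simp
lemma coe_ms (t : Multiset ℕ) :
    (do let a ← t; pure ((a : ℚ)) : Multiset ℚ) = Multiset.map (Nat.cast : ℕ → ℚ) t := by
  show Multiset.bind t (fun a => {(a:ℚ)}) = _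
  exact Multiset.bind_singleton t _

theorem stmt_17 (n s : ℕ) (hn : 1 ≤ n) (hs : 1 ≤ s) (X : ℚ) :
    ∑ μ : n.Partition, X ^ (μ.parts.card - 1) / zpart n μ *
        (μ.parts.map fun m => asc (m : ℚ) s).sum =
      (Nat.factorial (s - 1) : ℚ) * ∑ k ∈ Icc 1 (min n s),
        (Nat.choose s k : ℚ) * (desc (X + n - 1) (n - k) / Nat.factorial (n - k)) := by
  have step1 : ∑ μ : n.Partition, X ^ (μ.parts.card - 1) / zpart n μ *
        (μ.parts.map fun m => asc (m : ℚ) s).sum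
      = ∑ i ∈ range (n+1), asc (i:ℚ) s *
          ∑ μ : n.Partition, (μ.parts.count i : ℚ) * X ^ (μ.parts.card - 1) / zpart n μ := by
    calc ∑ μ : n.Partition, X ^ (μ.parts.card - 1) / zpart n μ *
          (μ.parts.map fun m => asc (m : ℚ) s).sum
        = ∑ μ : n.Partition, ∑ i ∈ range (n+1),
            asc (i:ℚ) s * ((μ.parts.count i : ℚ) * X ^ (μ.parts.card - 1) / zpart n μ) := by
          refine Finset.sum_congr rfl fun μ _ => ?_
          rw [coe_ms, Multiset.map_map,
            parts_map_sum μ ((fun m => asc m s) ∘ (Nat.cast : ℕ → ℚ)), Finset.mul_sum]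
          refine Finset.sum_congr rfl fun i _ => ?_
          simp only [Function.comp_apply]
          ring
      _ = ∑ i ∈ range (n+1), ∑ μ : n.Partition, asc (i:ℚ) s *
            ((μ.parts.count i : ℚ) * X ^ (μ.parts.card - 1) / zpart n μ) := Finset.sum_comm
      _ = _ := by
          refine Finset.sum_congr rfl fun i _ => ?_
          rw [Finset.mul_sum]
  have step2 : ∑ i ∈ range (n+1), asc (i:ℚ) s *
          (∑ μ : n.Partition, (μ.parts.count i : ℚ) * X ^ (μ.parts.card - 1) / zpart n μ)
      = ∑ i ∈ Icc 1 n, asc (i:ℚ) s *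
          (∑ μ : n.Partition, (μ.parts.count i : ℚ) * X ^ (μ.parts.card - 1) / zpart n μ) := by
    symm
    apply Finset.sum_subset
    · intro x hx
      simp only [Finset.mem_Icc] at hx
      exact Finset.mem_range.2 (by omega)
    · intro i hi hni
      have hi0 : i = 0 := by
        simp only [Finset.mem_range] at hi
        simp only [Finset.mem_Icc] at hni
        omega
      subst hi0
      rw [Nat.cast_zero, asc_zero_eq s hs, zero_mul]
  have step3 : ∀ i ∈ Icc 1 n, asc (i:ℚ) s *
        (∑ μ : n.Partition, (μ.parts.count i : ℚ) * X ^ (μ.parts.card - 1) / zpart n μ)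
      = (Nat.factorial (s-1) : ℚ) * (((i+s-1).choose i : ℚ) *
          (desc (X + ((n:ℚ) - i) - 1) (n-i) / (Nat.factorial (n-i) : ℚ))) := by
    intro i hi
    simp only [Finset.mem_Icc] at hi
    rw [core n i X (by omega) (by omega), A_eq X (n-i), asc_eq i s hi.1 hs]
    have hiQ : (i:ℚ) ≠ 0 := Nat.cast_ne_zero.2 (by omega)
    have hcast : ((n-i : ℕ):ℚ) = (n:ℚ) - i := by
      rw [Nat.cast_sub hi.2]
    rw [hcast]
    field_simp
  have hins : range (n+1) = insert 0 (Icc 1 n) := by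
    ext x
    simp only [Finset.mem_range, Finset.mem_insert, Finset.mem_Icc]
    omega
  have key := keyQ n s hs X
  rw [hins, Finset.sum_insert (by simp), Finset.sum_insert (by simp)] at key
  simp only [Nat.cast_zero, sub_zero, Nat.sub_zero, Nat.zero_add, Nat.choose_zero_right,
    Nat.cast_one, one_mul] at key
  have key2 : ∑ i ∈ Icc 1 n, ((i+s-1).choose i : ℚ) *
        (desc (X + ((n:ℚ) - i) - 1) (n-i) / (Nat.factorial (n-i) : ℚ))
      = ∑ k ∈ Icc 1 n, (s.choose k : ℚ) *
        (desc (X + (n:ℚ) - 1) (n-k) / (Nat.factorial (n-k) : ℚ)) := by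
    have h0L : ((0+s-1).choose 0 : ℚ) = 1 := by simp
    exact add_left_cancel key
  have htrunc : ∑ k ∈ Icc 1 n, (s.choose k : ℚ) *
        (desc (X + (n:ℚ) - 1) (n-k) / (Nat.factorial (n-k) : ℚ))
      = ∑ k ∈ Icc 1 (min n s), (s.choose k : ℚ) *
        (desc (X + (n:ℚ) - 1) (n-k) / (Nat.factorial (n-k) : ℚ)) := by
    symm
    apply Finset.sum_subset
    · intro x hx
      simp only [Finset.mem_Icc] at hx ⊢
      omega
    · intro k hk hnk
      have hks : s < k := by
        simp only [Finset.mem_Icc] at hk hnk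
        omega
      rw [Nat.choose_eq_zero_of_lt hks, Nat.cast_zero, zero_mul]
  rw [step1, step2, Finset.sum_congr rfl step3, ← Finset.mul_sum, key2, htrunc]
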